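/- Let (R_i)_{i∈I} be a cofiltered system of commutative rings which is p-torsion free as a pro-ring (for each i there is j ≥ i with R_j[p] → R_i[p] the zero map). Then for each i there is j ≥ i and a unique ring homomorphism s: \overline{W}_1(R_j) → W_1(R_i) splitting the diagram: s composed with the ghost surjection W_1(R_j) → \overline{W}_1(R_j) equals the structure map W_1(R_j) → W_1(R_i), and the projection composed with s equals the structure map \overline{W}_1(R_j) → \overline{W}_1(R_i). Consequently the pro-rings (W_1(R_i))_i and (\overline{W}_1(R_i))_i are pro-isomorphic. -/
import Mathlib


open WittVector

/-- The functorial map `W_n(f) : W_n(R) → W_n(S)` on truncated Witt vectors induced by a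
ring homomorphism `f : R → S`. -/
noncomputable def twvMap (p : ℕ) [Fact p.Prime] (n : ℕ) {R S : Type*} [CommRing R] [CommRing S]
    (f : R →+* S) : TruncatedWittVector p n R →+* TruncatedWittVector p n S :=
  RingHom.liftOfRightInverse (WittVector.truncate n) TruncatedWittVector.out
    TruncatedWittVector.truncateFun_out
    ⟨(WittVector.truncate n).comp (WittVector.map f), by
      intro x hx
      rw [WittVector.mem_ker_truncate] at hx
      rw [RingHom.mem_ker, RingHom.comp_apply, ← RingHom.mem_ker, WittVector.mem_ker_truncate]
      intro i hi
      rw [WittVector.map_coeff, hx i hi, map_zero]⟩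

theorem twvMap_coeff (p : ℕ) [Fact p.Prime] (n : ℕ) {R S : Type*} [CommRing R] [CommRing S]
    (f : R →+* S) (x : TruncatedWittVector p n R) (k : Fin n) :
    (twvMap p n f x).coeff k = f (x.coeff k) := by
  have hx : WittVector.truncate n x.out = x := TruncatedWittVector.truncateFun_out x
  have hri : Function.RightInverse (TruncatedWittVector.out (p := p) (n := n) (R := R))
      (WittVector.truncate n) := TruncatedWittVector.truncateFun_out
  have h : twvMap p n f (WittVector.truncate n x.out) =
      ((WittVector.truncate n).comp (WittVector.map f)) x.out :=
    (WittVector.truncate n).liftOfRightInverse_comp_apply _ hri _ x.out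
  rw [hx] at h
  rw [h, RingHom.comp_apply]
  show (WittVector.truncateFun n (WittVector.map f x.out)).coeff k = _
  rw [WittVector.coeff_truncateFun, WittVector.map_coeff, TruncatedWittVector.coeff_out]

/-- For a p-torsion free pro-ring (R_i), the ghost quotient Wbar_1(R_j) -> W_1(R_i)
splits compatibly: for each i there are j >= i and a unique ring homomorphism
s : Wbar_1(R_j) -> W_1(R_i) such that s composed with the ghost surjection
W_1(R_j) -> Wbar_1(R_j) is the structure map W_1(R_j) -> W_1(R_i), and the ghost map
composed with s is the structure map Wbar_1(R_j) -> Wbar_1(R_i). -/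
theorem wbar_splits_pro (p : ℕ) [Fact p.Prime] {I : Type*} [Preorder I]
    [IsDirected I (· ≤ ·)]
    (R : I → Type) [inst : ∀ i, CommRing (R i)]
    (t : ∀ i j, i ≤ j → (R j →+* R i))
    (ht : ∀ i j k (hij : i ≤ j) (hjk : j ≤ k), (t i j hij).comp (t j k hjk) = t i k (hij.trans hjk))
    (hptf : ∀ i, ∃ j, ∃ _ : i ≤ j, ∀ x : R j, (p : R j) * x = 0 → t i j ‹i ≤ j› x = 0)
    (gh : ∀ (A : Type) [CommRing A], TruncatedWittVector p 2 A →+* A × A)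
    (hgh : ∀ (A : Type) (_ : CommRing A) (x : TruncatedWittVector p 2 A),
      gh A x = (x.coeff 0, x.coeff 0 ^ p + p * x.coeff 1)) :
    ∀ i, ∃ j, ∃ h : i ≤ j,
      ∃! s : (gh (R j)).range →+* TruncatedWittVector p 2 (R i),
        s.comp (gh (R j)).rangeRestrict = twvMap p 2 (t i j h) ∧
          ∀ y : (gh (R j)).range,
            gh (R i) (s y) = (t i j h (y : R j × R j).1, t i j h (y : R j × R j).2) := by
  intro i
  obtain ⟨j, hij, hj⟩ := hptf i
  refine ⟨j, hij, ?_⟩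
  have hsurj : Function.Surjective (gh (R j)).rangeRestrict :=
    (gh (R j)).rangeRestrict_surjective
  -- kernel condition
  have hker : ∀ x ∈ RingHom.ker (gh (R j)).rangeRestrict,
      x ∈ RingHom.ker (twvMap p 2 (t i j hij)) := by
    intro x hx
    rw [RingHom.mem_ker] at hx ⊢
    have hx' : gh (R j) x = 0 := by
      have := congrArg (Subtype.val) hx
      simpa using this
    rw [hgh] at hx'
    have h0 : x.coeff 0 = 0 := congrArg Prod.fst hx'
    have h1 : (p : R j) * x.coeff 1 = 0 := by
      have := congrArg Prod.snd hx'
      simp only at this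
      rw [h0] at this
      simpa [zero_pow (Nat.Prime.ne_zero Fact.out)] using this
    apply TruncatedWittVector.ext
    intro k
    rw [twvMap_coeff, TruncatedWittVector.coeff_zero]
    fin_cases k
    · show t i j hij (x.coeff 0) = 0
      rw [h0, map_zero]
    · show t i j hij (x.coeff 1) = 0
      exact hj _ h1
  refine ⟨(gh (R j)).rangeRestrict.liftOfRightInverse
      (Function.surjInv hsurj) (Function.rightInverse_surjInv hsurj)
      ⟨twvMap p 2 (t i j hij), hker⟩, ⟨?_, ?_⟩, ?_⟩
  · refine RingHom.ext fun x => ?_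
    rw [RingHom.comp_apply]
    exact (gh (R j)).rangeRestrict.liftOfRightInverse_comp_apply _
      (Function.rightInverse_surjInv hsurj) _ x
  · intro y
    obtain ⟨x, rfl⟩ := hsurj y
    have h1 : (gh (R j)).rangeRestrict.liftOfRightInverse
        (Function.surjInv hsurj) (Function.rightInverse_surjInv hsurj)
        ⟨twvMap p 2 (t i j hij), hker⟩ ((gh (R j)).rangeRestrict x) =
        twvMap p 2 (t i j hij) x :=
      (gh (R j)).rangeRestrict.liftOfRightInverse_comp_apply _
        (Function.rightInverse_surjInv hsurj) _ x
    rw [h1, hgh]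
    have hv : (((gh (R j)).rangeRestrict x : (gh (R j)).range) : R j × R j) = gh (R j) x := rfl
    rw [hv, hgh]
    simp [twvMap_coeff, map_add, map_mul, map_pow]
  · rintro s' ⟨hs1, _⟩
    ext y
    obtain ⟨x, rfl⟩ := hsurj y
    have h1 : (gh (R j)).rangeRestrict.liftOfRightInverse
        (Function.surjInv hsurj) (Function.rightInverse_surjInv hsurj)
        ⟨twvMap p 2 (t i j hij), hker⟩ ((gh (R j)).rangeRestrict x) =
        twvMap p 2 (t i j hij) x :=
      (gh (R j)).rangeRestrict.liftOfRightInverse_comp_apply _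
        (Function.rightInverse_surjInv hsurj) _ x
    rw [h1, ← hs1, RingHom.comp_apply]
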